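/- Let g : [0,∞) → ℝ be continuous with ∫₀ᵗ g denoted G(t), let q₀ < 0, Z(t) = exp(−G(t)), let t* ∈ (0,∞) satisfy −(1/2) q₀ ∫₀^{t*} Z(s) ds = 1, and let Q(t) = Z(t)/(1/q₀ + (1/2)∫₀ᵗ Z(s) ds) on [0,t*). Suppose D : [0,t*) → ℝ is differentiable with D(0) = d₀ and D′(t) = (Q(t) + g(t)) D(t) for all t ∈ [0,t*). Then D(t) = d₀ · (1 + (1/2) q₀ ∫₀ᵗ Z(s) ds)² · exp(G(t)) for every t ∈ [0,t*); consequently, if d₀ ≠ 0 then D(t) ≠ 0 for every t ∈ [0,t*), and D(t) → 0 as t → t* from below. In other words, the difference of two characteristics vanishes for the first time exactly at the wave-breaking time t*. -/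

import Mathlib

open MeasureTheory Real Set Filter

/-- The difference of two characteristics for box data satisfies the
linear equation `D′ = (Q + g)D`; hence `D(t) = d₀ (1 + (1/2) q₀ ∫₀ᵗ Z)² exp(G(t))`,
so that (for `d₀ ≠ 0`) `D` does not vanish before the wave-breaking time `t*` and
tends to `0` as `t → t*⁻`: characteristics meet exactly at wave-breaking. -/
theorem characteristics_meet_at_wave_breaking
    (g : ℝ → ℝ) (hg : Continuous g)
    (G : ℝ → ℝ) (hG : ∀ t, G t = ∫ s in (0:ℝ)..t, g s)
    (q₀ : ℝ) (hq₀ : q₀ < 0)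
    (Z : ℝ → ℝ) (hZ : ∀ t, Z t = Real.exp (-G t))
    (tstar : ℝ) (htstar : 0 < tstar)
    (heq : -(1/2) * q₀ * ∫ s in (0:ℝ)..tstar, Z s = 1)
    (Q : ℝ → ℝ)
    (hQ : ∀ t ∈ Set.Ico (0:ℝ) tstar,
      Q t = Z t / (1 / q₀ + (1/2) * ∫ s in (0:ℝ)..t, Z s))
    (D : ℝ → ℝ) (d₀ : ℝ) (hD0 : D 0 = d₀)
    (hD : ∀ t ∈ Set.Ico (0:ℝ) tstar, HasDerivAt D ((Q t + g t) * D t) t) :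
    (∀ t ∈ Set.Ico (0:ℝ) tstar,
      D t = d₀ * (1 + (1/2) * q₀ * ∫ s in (0:ℝ)..t, Z s)^2 * Real.exp (G t)) ∧
    (d₀ ≠ 0 →
      (∀ t ∈ Set.Ico (0:ℝ) tstar, D t ≠ 0) ∧
      Filter.Tendsto D (nhdsWithin tstar (Set.Iio tstar)) (nhds 0)) := by
  have hq₀' : q₀ ≠ 0 := ne_of_lt hq₀
  -- derivative of G
  have hGfun : G = fun u => ∫ s in (0:ℝ)..u, g s := funext hG
  have hGd : ∀ t, HasDerivAt G (g t) t := by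
    intro t
    rw [hGfun]
    exact (hg.integral_hasStrictDerivAt 0 t).hasDerivAt
  -- properties of Z
  have hZpos : ∀ t, 0 < Z t := fun t => by rw [hZ t]; exact Real.exp_pos _
  have hZd : ∀ t, HasDerivAt Z (Z t * (-g t)) t := by
    intro t
    have h := ((hGd t).neg).exp
    have hZfun : Z = fun u => Real.exp (-G u) := funext hZ
    rw [hZfun]
    simpa [hZ t] using h
  have hZcont : Continuous Z := continuous_iff_continuousAt.mpr
    fun t => (hZd t).continuousAt
  -- integral of Z and the function A
  set I : ℝ → ℝ := fun t => ∫ s in (0:ℝ)..t, Z s with hIdef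
  have hId : ∀ t, HasDerivAt I (Z t) t := fun t =>
    (hZcont.integral_hasStrictDerivAt 0 t).hasDerivAt
  set A : ℝ → ℝ := fun t => 1 / q₀ + (1/2) * I t with hAdef
  have hAd : ∀ t, HasDerivAt A ((1/2) * Z t) t := fun t =>
    ((hId t).const_mul (1/2)).const_add (1 / q₀)
  have hImono : StrictMono I := by
    apply strictMono_of_deriv_pos
    intro t
    rw [(hId t).deriv]
    exact hZpos t
  have hItstar : (1/2) * I tstar = -(1 / q₀) := by
    have : q₀ * ((1/2) * I tstar) = -1 := by
      have := heq
      simp only [hIdef] at *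
      linarith [heq]
    field_simp
    linarith [this]
  have hAtstar : A tstar = 0 := by
    simp only [hAdef, hItstar]; ring
  have hAneg : ∀ t ∈ Set.Ico (0:ℝ) tstar, A t < 0 := by
    intro t ht
    have h1 : I t < I tstar := hImono ht.2
    have : A t < A tstar := by simp only [hAdef]; linarith
    linarith [hAtstar ▸ this]
  have hAne : ∀ t ∈ Set.Ico (0:ℝ) tstar, A t ≠ 0 :=
    fun t ht => ne_of_lt (hAneg t ht)
  -- W is constant
  set W : ℝ → ℝ := fun t => D t * Z t / (A t)^2 with hWdef
  have hWd : ∀ x ∈ Set.Ico (0:ℝ) tstar, HasDerivAt W 0 x := by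
    intro x hx
    have hAx := hAne x hx
    have hA2 : HasDerivAt (fun t => (A t)^2) (2 * A x ^ 1 * ((1/2) * Z x)) x :=
      (hAd x).pow 2
    have hN : HasDerivAt (fun t => D t * Z t)
        ((Q x + g x) * D x * Z x + D x * (Z x * (-g x))) x :=
      (hD x hx).mul (hZd x)
    have hA2ne : (A x)^2 ≠ 0 := pow_ne_zero _ hAx
    have hdiv := hN.div hA2 hA2ne
    convert hdiv using 1
    case e'_4 => rfl
    case e'_5 => rfl
    case e'_8 => rfl
    rw [hQ x hx]
    have : (1 / q₀ + 1/2 * ∫ s in (0:ℝ)..x, Z s) = A x := rfl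
    rw [this]
    field_simp
    ring
  have hWconst : ∀ t ∈ Set.Ico (0:ℝ) tstar, W t = W 0 := by
    intro t ht
    have hsub : Set.Icc (0:ℝ) t ⊆ Set.Ico (0:ℝ) tstar := fun x hx =>
      ⟨hx.1, lt_of_le_of_lt hx.2 ht.2⟩
    have := constant_of_has_deriv_right_zero
      (f := W) (a := 0) (b := t)
      (fun x hx => ((hWd x (hsub hx)).continuousAt).continuousWithinAt)
      (fun x hx => ((hWd x (hsub ⟨hx.1, le_of_lt hx.2⟩)).hasDerivWithinAt))
    exact this t ⟨ht.1, le_refl t⟩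
  -- evaluate W 0
  have hG0 : G 0 = 0 := by rw [hG 0, intervalIntegral.integral_same]
  have hZ0 : Z 0 = 1 := by rw [hZ 0, hG0, neg_zero, Real.exp_zero]
  have hA0 : A 0 = 1 / q₀ := by
    simp only [hAdef, hIdef, intervalIntegral.integral_same]; ring
  have hW0 : W 0 = d₀ * q₀ ^ 2 := by
    simp only [hWdef, hD0, hZ0, hA0]
    field_simp
  -- the main formula
  have hmain : ∀ t ∈ Set.Ico (0:ℝ) tstar,
      D t = d₀ * (1 + (1/2) * q₀ * ∫ s in (0:ℝ)..t, Z s)^2 * Real.exp (G t) := by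
    intro t ht
    have hW := hWconst t ht
    rw [hW0] at hW
    have hZt : Z t ≠ 0 := ne_of_gt (hZpos t)
    have hAt : A t ≠ 0 := hAne t ht
    have hexp : Real.exp (G t) = (Z t)⁻¹ := by
      rw [hZ t, Real.exp_neg, inv_inv]
    have key : D t * Z t = d₀ * q₀ ^ 2 * (A t)^2 := by
      have := hW
      simp only [hWdef] at this
      field_simp at this
      linarith [this]
    have hq : 1 + (1/2) * q₀ * I t = q₀ * A t := by
      simp only [hAdef]; field_simp
    have : D t = d₀ * (q₀ * A t)^2 * (Z t)⁻¹ := by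
      field_simp
      rw [key]
    rw [this, hexp, ← hq]
  refine ⟨hmain, fun hd₀ => ⟨?_, ?_⟩⟩
  · intro t ht
    rw [hmain t ht]
    have hAt : A t < 0 := hAneg t ht
    have hq : 1 + (1/2) * q₀ * I t = q₀ * A t := by
      simp only [hAdef]; field_simp
    have hpos : (0:ℝ) < q₀ * A t := mul_pos_of_neg_of_neg hq₀ hAt
    have h1 : (1 + (1/2) * q₀ * ∫ s in (0:ℝ)..t, Z s) ≠ 0 := by
      have : (1 + (1/2) * q₀ * I t) ≠ 0 := by rw [hq]; exact ne_of_gt hpos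
      exact this
    exact mul_ne_zero (mul_ne_zero hd₀ (pow_ne_zero _ h1)) (ne_of_gt (Real.exp_pos _))
  · -- Tendsto
    set F : ℝ → ℝ := fun t => d₀ * (1 + (1/2) * q₀ * I t)^2 * Real.exp (G t) with hFdef
    have hFcont : ContinuousAt F tstar := by
      have h1 : ContinuousAt (fun t => 1 + 1/2 * q₀ * I t) tstar :=
        continuousAt_const.add ((hId tstar).continuousAt.const_mul (1/2 * q₀))
      have h2 : ContinuousAt (fun t => Real.exp (G t)) tstar :=
        (Real.continuous_exp.continuousAt).comp (hGd tstar).continuousAt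
      exact (continuousAt_const.mul (h1.pow 2)).mul h2
    have hFtstar : F tstar = 0 := by
      have h0 : 1 + (1/2) * q₀ * I tstar = 0 := by
        have : q₀ * ((1/2) * I tstar) = q₀ * (-(1/q₀)) := by rw [hItstar]
        have h2 : q₀ * (-(1/q₀)) = -1 := by field_simp
        nlinarith [this, h2]
      simp only [hFdef, h0]
      ring
    have hT : Filter.Tendsto F (nhdsWithin tstar (Set.Iio tstar)) (nhds 0) := by
      rw [← hFtstar]
      exact hFcont.continuousWithinAt.tendsto
    apply hT.congr'
    filter_upwards [Ioo_mem_nhdsLT_of_mem (⟨htstar, le_refl tstar⟩ : tstar ∈ Set.Ioc 0 tstar)]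
      with t ht
    have ht' : t ∈ Set.Ico (0:ℝ) tstar := ⟨le_of_lt ht.1, ht.2⟩
    rw [hmain t ht']
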